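/- For a < 1, consider on the simplex S = {(x₁,…,xₙ) : xᵢ ≥ 0, Σxᵢ ≤ 1} the convex function h(x) = max(1 - (x₁+⋯+xₙ)/a, 0). Then the L^p norm of h on S equals a^{n/p}·C₁ and the integral of h over the boundary faces {xᵢ = 0} equals a^{n-1}·C₂, for constants C₁, C₂ > 0 depending only on n and p. In particular, for n > 2 and p = 2 there is no constant C with ‖h‖_{L²(S)} ≤ C ∫_{∂S} h dσ uniformly in a. -/

import Mathlib

open MeasureTheory Set Metric
open scoped Pointwise ENNReal NNReal

noncomputable section
namespace Stmt3Aux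

abbrev Eu (n : ℕ) := EuclideanSpace ℝ (Fin n)

def Sx (n : ℕ) : Set (Eu n) := {x | (∀ i, 0 ≤ x i) ∧ ∑ i, x i ≤ 1}
def Ox (n : ℕ) : Set (Eu n) := {x | ∀ i, 0 ≤ x i}
def g (n : ℕ) : Eu n → ℝ := fun x => max (1 - ∑ i, x i) 0
def ins (m : ℕ) (j : Fin (m + 1)) : Eu m → Eu (m + 1) := fun x => WithLp.toLp 2 (j.insertNth (α := fun _ => ℝ) 0 (WithLp.ofLp x))

section Base
variable (n : ℕ)

lemma cont_coord (i : Fin n) : Continuous fun x : Eu n => x i :=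
  (continuous_apply i).comp (PiLp.continuous_ofLp _ _)

lemma cont_sum : Continuous fun x : Eu n => ∑ i, x i :=
  continuous_finset_sum _ fun i _ => cont_coord n i

lemma isClosed_Ox : IsClosed (Ox n) := by
  have : Ox n = ⋂ i, {x : Eu n | 0 ≤ x i} := by ext x; simp [Ox]
  rw [this]
  exact isClosed_iInter fun i => isClosed_le continuous_const (cont_coord n i)

lemma isClosed_Sx : IsClosed (Sx n) := by
  have : Sx n = Ox n ∩ {x : Eu n | ∑ i, x i ≤ 1} := rfl
  rw [this]
  exact (isClosed_Ox n).inter (isClosed_le (cont_sum n) continuous_const)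

lemma Sx_subset_ball : Sx n ⊆ closedBall (0 : Eu n) 1 := by
  intro x ⟨hpos, hsum⟩
  rw [mem_closedBall, dist_zero_right, EuclideanSpace.norm_eq]
  apply Real.sqrt_le_one.mpr
  calc ∑ i, ‖x i‖ ^ 2 ≤ ∑ i, x i := by
        apply Finset.sum_le_sum
        intro i _
        have h1 : x i ≤ 1 := le_trans
          (Finset.single_le_sum (fun i _ => hpos i) (Finset.mem_univ i)) hsum
        rw [Real.norm_eq_abs, abs_of_nonneg (hpos i)]
        nlinarith [hpos i]
    _ ≤ 1 := hsum

lemma isCompact_Sx : IsCompact (Sx n) :=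
  (isCompact_closedBall 0 1).of_isClosed_subset (isClosed_Sx n) (Sx_subset_ball n)

lemma cont_g : Continuous (g n) :=
  (continuous_const.sub (cont_sum n)).max continuous_const

lemma sum_smul_apply (c : ℝ) (x : Eu n) : ∑ i, (c • x) i = c * ∑ i, x i := by
  simp [Finset.mul_sum]


end Base

lemma vol_scale (n : ℕ) (p : ℝ) (hp : p ≠ 0) {a : ℝ} (ha : 0 < a) (ha1 : a < 1) :
    ∫ x in Sx n, (max (1 - (∑ i, x i) / a) 0) ^ p
      = a ^ n * ∫ x in Sx n, g n x ^ p := by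
  have hOx : MeasurableSet (Ox n) := (isClosed_Ox n).measurableSet
  have hSx : MeasurableSet (Sx n) := (isClosed_Sx n).measurableSet
  set F : Eu n → ℝ := (Ox n).indicator (fun y => g n y ^ p) with hF
  have hsum_smul : ∀ (c : ℝ) (x : Eu n), ∑ i, (c • x) i = c * ∑ i, x i := by
    intro c x; simp [Finset.mul_sum]
  have hA : ∫ x in Sx n, (max (1 - (∑ i, x i) / a) 0) ^ p = ∫ x, F (a⁻¹ • x) := by
    rw [← integral_indicator hSx]
    congr 1; funext x
    by_cases hx : ∀ i, 0 ≤ x i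
    · have hxO : a⁻¹ • x ∈ Ox n := fun i => by
        have := hx i
        have : 0 ≤ a⁻¹ * x i := mul_nonneg (by positivity) this
        simpa using this
      rw [hF, indicator_of_mem hxO]
      have hsum : ∑ i, (a⁻¹ • x) i = (∑ i, x i) / a := by
        rw [hsum_smul]; ring
      by_cases hx1 : ∑ i, x i ≤ 1
      · rw [indicator_of_mem (show x ∈ Sx n from ⟨hx, hx1⟩), g, hsum]
      · rw [indicator_of_notMem (fun h => hx1 h.2)]
        have h1 : 1 - (∑ i, x i) / a < 0 := by
          have : 1 < ∑ i, x i := not_le.mp hx1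
          have : 1 < (∑ i, x i) / a := by
            rw [lt_div_iff₀ ha]; nlinarith
          linarith
        rw [g, hsum, max_eq_right h1.le, Real.zero_rpow hp]
    · rw [indicator_of_notMem (fun h => hx h.1), hF,
        indicator_of_notMem (fun h => hx (fun i => by
          have := h i
          simp only [PiLp.smul_apply, smul_eq_mul] at this
          nlinarith [inv_pos.mpr ha]))]
  rw [hA, Measure.integral_comp_smul volume F a⁻¹]
  have hfr : Module.finrank ℝ (Eu n) = n := finrank_euclideanSpace_fin
  rw [hfr]
  have habs : |((a⁻¹ : ℝ) ^ n)⁻¹| = a ^ n := by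
    rw [← inv_pow, inv_inv, abs_of_pos (pow_pos ha n)]
  rw [habs, smul_eq_mul]
  congr 1
  rw [hF, integral_indicator hOx]
  rw [← integral_indicator hOx, ← integral_indicator hSx]
  congr 1; funext x
  by_cases hx : ∀ i, 0 ≤ x i
  · have hxO : x ∈ Ox n := hx
    by_cases hx1 : ∑ i, x i ≤ 1
    · rw [indicator_of_mem hxO, indicator_of_mem (show x ∈ Sx n from ⟨hx, hx1⟩)]
    · rw [indicator_of_mem hxO, indicator_of_notMem (fun h => hx1 h.2)]
      have h2 : 1 - ∑ i, x i < 0 := by linarith [not_le.mp hx1]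
      show g n x ^ p = 0
      rw [show g n x = 0 from max_eq_right h2.le, Real.zero_rpow hp]
  · rw [indicator_of_notMem (show x ∉ Ox n from hx),
      indicator_of_notMem (fun h => hx h.1)]


lemma bdry_scale (n : ℕ) (j : Fin n) (hd : 0 ≤ (n : ℝ) - 1) {a : ℝ} (ha : 0 < a) (ha1 : a < 1) :
    ∫ x in Sx n ∩ {x | x j = 0}, max (1 - (∑ i, x i) / a) 0 ∂(μH[(n : ℝ) - 1])
      = a ^ ((n : ℝ) - 1) * ∫ x in Sx n ∩ {x | x j = 0}, g n x ∂(μH[(n : ℝ) - 1]) := by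
  set d : ℝ := (n : ℝ) - 1 with hdd
  set B : Set (Eu n) := Ox n ∩ {x | x j = 0} with hB
  have hBclosed : IsClosed B :=
    (isClosed_Ox n).inter (isClosed_eq (cont_coord n j) continuous_const)
  have hBmeas : MeasurableSet B := hBclosed.measurableSet
  have hSmeas : MeasurableSet (Sx n ∩ {x | x j = 0}) :=
    ((isClosed_Sx n).inter (isClosed_eq (cont_coord n j) continuous_const)).measurableSet
  have hsum_smul : ∀ (c : ℝ) (x : Eu n), ∑ i, (c • x) i = c * ∑ i, x i := by
    intro c x; simp [Finset.mul_sum]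
  -- reduce integration set to B
  have key : ∀ φ : Eu n → ℝ, (∀ x : Eu n, (1 : ℝ) < ∑ i, x i → φ x = 0) →
      ∫ x in Sx n ∩ {x | x j = 0}, φ x ∂(μH[d]) = ∫ x in B, φ x ∂(μH[d]) := by
    intro φ hφ
    rw [← integral_indicator hSmeas, ← integral_indicator hBmeas]
    congr 1; funext x
    by_cases hx : x ∈ Sx n ∩ {x | x j = 0}
    · rw [indicator_of_mem hx, indicator_of_mem (show x ∈ B from ⟨hx.1.1, hx.2⟩)]
    · rw [indicator_of_notMem hx]
      by_cases hxB : x ∈ B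
      · rw [indicator_of_mem hxB]
        have h1 : ¬ (∑ i, x i ≤ 1) := fun hc => hx ⟨⟨hxB.1, hc⟩, hxB.2⟩
        exact (hφ x (not_le.mp h1)).symm
      · rw [indicator_of_notMem hxB]
  have hga : ∀ x : Eu n, (1:ℝ) < ∑ i, x i → max (1 - (∑ i, x i) / a) 0 = 0 := by
    intro x hx
    have : 1 < (∑ i, x i) / a := by
      rw [lt_div_iff₀ ha]; nlinarith
    exact max_eq_right (by linarith)
  have hg1 : ∀ x : Eu n, (1:ℝ) < ∑ i, x i → g n x = 0 := fun x hx =>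
    max_eq_right (by linarith)
  rw [key _ hga, key _ hg1]
  -- change of variables x = a • y on B
  have hane : a ≠ 0 := ha.ne'
  have hφm : Measurable fun x : Eu n => a • x := (continuous_const_smul a).measurable
  -- B is scale invariant
  have hBsmul : ∀ {c : ℝ}, 0 < c → ∀ x : Eu n, c • x ∈ B ↔ x ∈ B := by
    intro c hc x
    constructor
    · rintro ⟨h1, h2⟩
      refine ⟨fun i => ?_, ?_⟩
      · have := h1 i; simp only [PiLp.smul_apply, smul_eq_mul] at this; nlinarith
      · have h2' := h2; simp only [mem_setOf_eq, PiLp.smul_apply, smul_eq_mul] at h2'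
        show x j = 0
        rcases mul_eq_zero.mp h2' with h | h
        · exact absurd h hc.ne'
        · exact h
    · rintro ⟨h1, h2⟩
      refine ⟨fun i => ?_, ?_⟩
      · simp only [PiLp.smul_apply, smul_eq_mul]; exact mul_nonneg hc.le (h1 i)
      · show (c • x) j = 0
        simp only [PiLp.smul_apply, smul_eq_mul]
        rw [show x j = 0 from h2, mul_zero]
  have hmap : Measure.map (fun x : Eu n => a • x) ((μH[d]).restrict B)
      = ((‖a⁻¹‖₊ ^ d : ℝ≥0) : ℝ≥0∞) • (μH[d]).restrict B := by
    ext s hs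
    rw [Measure.map_apply hφm hs, Measure.restrict_apply (hφm hs),
      Measure.smul_apply, Measure.restrict_apply hs]
    have hset : (fun x : Eu n => a • x) ⁻¹' s ∩ B = a⁻¹ • (s ∩ B) := by
      ext x
      simp only [mem_inter_iff, mem_preimage, Set.mem_smul_set_iff_inv_smul_mem₀
        (inv_ne_zero hane), inv_inv]
      all_goals simp only [hBsmul ha x]
      all_goals tauto
    rw [hset, Measure.hausdorffMeasure_smul₀ hd (inv_ne_zero hane) (s ∩ B)]
    rfl
  have hgs : StronglyMeasurable (g n) := (cont_g n).stronglyMeasurable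
  have step : ∫ x in B, g n x ∂(μH[d])
      = (a⁻¹) ^ d * ∫ x in B, max (1 - (∑ i, x i) / a) 0 ∂(μH[d]) := by
    have hcomp : ∀ y : Eu n, max (1 - (∑ i, (a • y) i) / a) 0 = g n y := by
      intro y
      rw [hsum_smul]
      congr 2
      field_simp
    calc ∫ x in B, g n x ∂(μH[d])
        = ∫ y, max (1 - (∑ i, ((fun x : Eu n => a • x) y) i) / a) 0 ∂((μH[d]).restrict B) := by
          rw [← integral_congr_ae (Filter.Eventually.of_forall fun y => (hcomp y))]
      _ = ∫ z, max (1 - (∑ i, z i) / a) 0 ∂(Measure.map (fun x : Eu n => a • x)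
            ((μH[d]).restrict B)) := by
          rw [integral_map hφm.aemeasurable]
          exact (((continuous_const.sub ((continuous_finset_sum _ fun i _ =>
            cont_coord n i).div_const a)).max continuous_const).stronglyMeasurable).aestronglyMeasurable
      _ = (a⁻¹) ^ d * ∫ x in B, max (1 - (∑ i, x i) / a) 0 ∂(μH[d]) := by
          rw [hmap, integral_smul_measure]
          congr 1
          rw [ENNReal.coe_toReal, NNReal.coe_rpow, coe_nnnorm, Real.norm_eq_abs,
            abs_of_pos (inv_pos.mpr ha)]
  have hadpos : 0 < a ^ d := Real.rpow_pos_of_pos ha d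
  rw [step, Real.inv_rpow ha.le, ← mul_assoc, mul_inv_cancel₀ hadpos.ne', one_mul]


lemma hausdorff_pi_eq (m : ℕ) : (μH[(m : ℝ)] : Measure (Fin m → ℝ)) = volume := by
  simpa using (hausdorffMeasure_pi_real (ι := Fin m))

lemma hausdorff_pos_of_isOpen {m : ℕ} {U : Set (Eu m)} (hU : IsOpen U) (hne : U.Nonempty) :
    0 < μH[(m : ℝ)] U := by
  set e : Eu m ≃ (Fin m → ℝ) := WithLp.equiv 2 (Fin m → ℝ) with he
  have hlip : LipschitzWith 1 ⇑e := PiLp.lipschitzWith_ofLp 2 _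
  have h1 : μH[(m : ℝ)] (⇑e '' U) ≤ 1 ^ (m : ℝ) * μH[(m : ℝ)] U :=
    hlip.hausdorffMeasure_image_le (by positivity) U
  have hopen : IsOpen (⇑e '' U) := by
    have : ⇑e '' U = ⇑e.symm ⁻¹' U := by
      ext y; simp [Equiv.image_eq_preimage_symm]
    rw [this]
    exact hU.preimage (PiLp.continuous_toLp 2 _)
  have hvol : 0 < μH[(m : ℝ)] (⇑e '' U) := by
    rw [hausdorff_pi_eq m]
    exact hopen.measure_pos volume (hne.image _)
  calc (0 : ℝ≥0∞) < μH[(m : ℝ)] (⇑e '' U) := hvol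
    _ ≤ 1 ^ (m : ℝ) * μH[(m : ℝ)] U := h1
    _ = μH[(m : ℝ)] U := by simp

lemma hausdorff_lt_top_of_bounded {m : ℕ} {s : Set (Eu m)} (hs : Bornology.IsBounded s) :
    μH[(m : ℝ)] s < ⊤ := by
  set e : Eu m ≃ (Fin m → ℝ) := WithLp.equiv 2 (Fin m → ℝ) with he
  have hanti : AntilipschitzWith _ ⇑e := PiLp.antilipschitzWith_ofLp 2 _
  have h1 := hanti.le_hausdorffMeasure_image (d := (m : ℝ)) (by positivity) s
  have hlip : LipschitzWith 1 ⇑e := PiLp.lipschitzWith_ofLp 2 _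
  have hbd : Bornology.IsBounded (⇑e '' s) := hlip.isBounded_image hs
  obtain ⟨R, hR⟩ := hbd.subset_closedBall 0
  have h2 : μH[(m : ℝ)] (⇑e '' s) ≤ μH[(m : ℝ)] (closedBall (0 : Fin m → ℝ) R) :=
    measure_mono hR
  have h3 : μH[(m : ℝ)] (closedBall (0 : Fin m → ℝ) R) < ⊤ := by
    rw [hausdorff_pi_eq m]
    exact (isCompact_closedBall 0 R).measure_lt_top
  refine lt_of_le_of_lt h1 ?_
  exact ENNReal.mul_lt_top (ENNReal.rpow_lt_top_of_nonneg (by positivity) ENNReal.coe_ne_top)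
    (lt_of_le_of_lt h2 h3)

lemma isometry_ins (m : ℕ) (j : Fin (m + 1)) : Isometry (ins m j) := by
  apply Isometry.of_dist_eq
  intro x y
  rw [EuclideanSpace.dist_eq, EuclideanSpace.dist_eq]
  congr 1
  rw [Fin.sum_univ_succAbove (fun i => dist (ins m j x i) (ins m j y i) ^ 2) j]
  simp [ins, Fin.insertNth_apply_same, Fin.insertNth_apply_succAbove]

lemma sum_ins (m : ℕ) (j : Fin (m + 1)) (x : Eu m) :
    ∑ i, ins m j x i = ∑ k, x k := by
  rw [Fin.sum_univ_succAbove (fun i => ins m j x i) j]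
  simp [ins, Fin.insertNth_apply_same, Fin.insertNth_apply_succAbove]

lemma ins_zero (m : ℕ) (j : Fin (m + 1)) : ins m j 0 = 0 := by
  ext i
  rcases eq_or_ne i j with rfl | hij
  · simp [ins, Fin.insertNth_apply_same]
  · obtain ⟨k, rfl⟩ := Fin.exists_succAbove_eq hij
    simp [ins, Fin.insertNth_apply_succAbove]

lemma norm_ins (m : ℕ) (j : Fin (m + 1)) (x : Eu m) : ‖ins m j x‖ = ‖x‖ := by
  have h := (isometry_ins m j).dist_eq x 0
  rw [ins_zero m j] at h
  rwa [dist_zero_right, dist_zero_right] at h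


lemma ins_apply_same (m : ℕ) (j : Fin (m + 1)) (y : Eu m) : ins m j y j = 0 :=
  Fin.insertNth_apply_same (α := fun _ : Fin (m + 1) => ℝ) j 0 y

lemma ins_apply_succAbove (m : ℕ) (j : Fin (m + 1)) (y : Eu m) (k : Fin m) :
    ins m j y (j.succAbove k) = y k :=
  Fin.insertNth_apply_succAbove (α := fun _ : Fin (m + 1) => ℝ) j 0 y k
lemma ins_eq_self (m : ℕ) (j : Fin (m + 1)) (x : Eu (m + 1)) (hx : x j = 0) :
    ins m j (WithLp.toLp 2 (j.removeNth x)) = x := by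
  show WithLp.toLp 2 (j.insertNth 0 (j.removeNth x.ofLp)) = x
  rw [← hx, Fin.insertNth_self_removeNth, WithLp.toLp_ofLp]

lemma face_subset_image (m : ℕ) (j : Fin (m + 1)) :
    Sx (m + 1) ∩ {x | x j = 0} ⊆ ins m j '' closedBall 0 1 := by
  rintro x ⟨hxS, hxj⟩
  set y : Eu m := WithLp.toLp 2 (j.removeNth x) with hy
  refine ⟨y, ?_, by rw [hy]; exact ins_eq_self m j x hxj⟩
  rw [mem_closedBall, dist_zero_right, ← norm_ins m j y, hy, ins_eq_self m j x hxj]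
  have := Sx_subset_ball (m + 1) hxS
  rwa [mem_closedBall, dist_zero_right] at this

lemma face_meas_lt_top (m : ℕ) (j : Fin (m + 1)) :
    μH[(m : ℝ)] (Sx (m + 1) ∩ {x | x j = 0}) < ⊤ := by
  calc μH[(m : ℝ)] (Sx (m + 1) ∩ {x | x j = 0})
      ≤ μH[(m : ℝ)] (ins m j '' closedBall 0 1) := measure_mono (face_subset_image m j)
    _ = μH[(m : ℝ)] (closedBall (0 : Eu m) 1) :=
        (isometry_ins m j).hausdorffMeasure_image (Or.inl (by positivity)) _
    _ < ⊤ := hausdorff_lt_top_of_bounded isBounded_closedBall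

def Ue (m : ℕ) : Set (Eu m) := {y | (∀ k, 0 < y k) ∧ ∑ k, y k < 1 / 2}

lemma isOpen_Ue (m : ℕ) : IsOpen (Ue m) := by
  have h1 : IsOpen {y : Eu m | ∀ k, 0 < y k} := by
    have : {y : Eu m | ∀ k, 0 < y k} = ⋂ k, {y : Eu m | 0 < y k} := by ext y; simp
    rw [this]
    exact isOpen_iInter_of_finite fun k =>
      isOpen_lt continuous_const (cont_coord m k)
  exact h1.inter (isOpen_lt (cont_sum m) continuous_const)

lemma nonempty_Ue (m : ℕ) : (Ue m).Nonempty := by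
  refine ⟨WithLp.toLp 2 (fun _ : Fin m => (1 / (2 * ((m : ℝ) + 1)) : ℝ)), fun k => by
      show (0 : ℝ) < 1 / (2 * ((m : ℝ) + 1)); positivity, ?_⟩
  simp only [WithLp.ofLp_toLp, Finset.sum_const, Finset.card_univ, Fintype.card_fin, nsmul_eq_mul]
  rw [mul_one_div, div_lt_div_iff₀ (by positivity) (by norm_num)]
  push_cast
  nlinarith [Nat.cast_nonneg (α := ℝ) m]

lemma ins_Ue_subset (m : ℕ) (j : Fin (m + 1)) :
    ins m j '' Ue m ⊆ Function.support (g (m + 1)) ∩ (Sx (m + 1) ∩ {x | x j = 0}) := by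
  rintro x ⟨y, ⟨hy1, hy2⟩, rfl⟩
  have hsum : ∑ i, ins m j y i = ∑ k, y k := sum_ins m j y
  have hxi : ∀ i, 0 ≤ ins m j y i := by
    intro i
    rcases eq_or_ne i j with h | hij
    · rw [h, ins_apply_same]
    · obtain ⟨k, rfl⟩ := Fin.exists_succAbove_eq hij
      rw [ins_apply_succAbove]
      exact (hy1 k).le
  refine ⟨?_, ⟨hxi, by rw [hsum]; linarith⟩, ?_⟩
  · show g (m + 1) (ins m j y) ≠ 0
    have : 0 < 1 - ∑ i, ins m j y i := by rw [hsum]; linarith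
    have : 0 < g (m + 1) (ins m j y) := lt_of_lt_of_le this (le_max_left _ _)
    exact this.ne'
  · show ins m j y j = 0
    exact ins_apply_same m j y

lemma face_support_pos (m : ℕ) (j : Fin (m + 1)) :
    0 < μH[(m : ℝ)] (Function.support (g (m + 1)) ∩ (Sx (m + 1) ∩ {x | x j = 0})) := by
  calc (0 : ℝ≥0∞) < μH[(m : ℝ)] (Ue m) := hausdorff_pos_of_isOpen (isOpen_Ue m) (nonempty_Ue m)
    _ = μH[(m : ℝ)] (ins m j '' Ue m) :=
        ((isometry_ins m j).hausdorffMeasure_image (Or.inl (by positivity)) _).symm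
    _ ≤ _ := measure_mono (ins_Ue_subset m j)

lemma J_pos (m : ℕ) (j : Fin (m + 1)) :
    0 < ∫ x in Sx (m + 1) ∩ {x | x j = 0}, g (m + 1) x ∂(μH[(m : ℝ)]) := by
  have hmeas : MeasurableSet (Sx (m + 1) ∩ {x | x j = 0}) :=
    ((isClosed_Sx (m + 1)).inter (isClosed_eq (cont_coord (m + 1) j)
      continuous_const)).measurableSet
  have hInt : IntegrableOn (g (m + 1)) (Sx (m + 1) ∩ {x | x j = 0}) μH[(m : ℝ)] := by
    apply Measure.integrableOn_of_bounded (face_meas_lt_top m j).ne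
      (cont_g (m + 1)).stronglyMeasurable.aestronglyMeasurable (M := 1)
    rw [ae_restrict_iff' hmeas]
    refine Filter.Eventually.of_forall fun x hx => ?_
    have h1 : 0 ≤ g (m + 1) x := le_max_right _ _
    have h2 : g (m + 1) x ≤ 1 := by
      have : (0:ℝ) ≤ ∑ i, x i := Finset.sum_nonneg fun i _ => hx.1.1 i
      exact max_le (by linarith) zero_le_one
    rw [Real.norm_eq_abs, abs_of_nonneg h1]
    exact h2
  refine (setIntegral_pos_iff_support_of_nonneg_ae
    (Filter.Eventually.of_forall fun x => le_max_right _ _) hInt).mpr ?_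
  exact face_support_pos m j

lemma I1_pos (n : ℕ) (p : ℝ) (hp : 1 ≤ p) :
    0 < ∫ x in Sx n, g n x ^ p := by
  have hcont : Continuous fun x : Eu n => g n x ^ p :=
    (cont_g n).rpow_const fun x => Or.inr (by linarith)
  have hInt : IntegrableOn (fun x => g n x ^ p) (Sx n) volume :=
    hcont.continuousOn.integrableOn_compact (isCompact_Sx n)
  refine (setIntegral_pos_iff_support_of_nonneg_ae
    (Filter.Eventually.of_forall fun x => Real.rpow_nonneg (le_max_right _ _) p) hInt).mpr ?_
  set V : Set (Eu n) := {y | (∀ k, 0 < y k) ∧ ∑ k, y k < 1 / 2} with hV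
  have hVopen : IsOpen V := by
    have h1 : IsOpen {y : Eu n | ∀ k, 0 < y k} := by
      have : {y : Eu n | ∀ k, 0 < y k} = ⋂ k, {y : Eu n | 0 < y k} := by ext y; simp
      rw [this]
      exact isOpen_iInter_of_finite fun k => isOpen_lt continuous_const (cont_coord n k)
    exact h1.inter (isOpen_lt (cont_sum n) continuous_const)
  have hVne : V.Nonempty := by
    refine ⟨WithLp.toLp 2 (fun _ : Fin n => (1 / (2 * ((n : ℝ) + 1)) : ℝ)), fun k => by
      show (0 : ℝ) < 1 / (2 * ((n : ℝ) + 1)); positivity, ?_⟩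
    simp only [WithLp.ofLp_toLp, Finset.sum_const, Finset.card_univ, Fintype.card_fin, nsmul_eq_mul]
    rw [mul_one_div, div_lt_div_iff₀ (by positivity) (by norm_num)]
    nlinarith [Nat.cast_nonneg (α := ℝ) n]
  have hsub : V ⊆ Function.support (fun x => g n x ^ p) ∩ Sx n := by
    rintro y ⟨hy1, hy2⟩
    have hg : 0 < g n y := lt_of_lt_of_le (by linarith : (0:ℝ) < 1 - ∑ k, y k)
      (le_max_left _ _)
    refine ⟨(Real.rpow_pos_of_pos hg p).ne', fun i => (hy1 i).le, by linarith⟩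
  calc (0 : ℝ≥0∞) < volume V := hVopen.measure_pos volume hVne
    _ ≤ _ := measure_mono hsub


lemma main_vol_eq (m : ℕ) (p : ℝ) (hp : 1 ≤ p) {a : ℝ} (ha : 0 < a) (ha1 : a < 1) :
    (∫ x in Sx (m + 1), (max (1 - (∑ i, x i) / a) 0) ^ p) ^ (1 / p)
      = a ^ (((m + 1 : ℕ) : ℝ) / p) * (∫ x in Sx (m + 1), g (m + 1) x ^ p) ^ (1 / p) := by
  rw [vol_scale (m + 1) p (by linarith) ha ha1,
    Real.mul_rpow (by positivity) (I1_pos (m + 1) p hp).le,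
    ← Real.rpow_natCast a (m + 1), ← Real.rpow_mul ha.le, mul_one_div]

lemma main_bdry_eq (m : ℕ) {a : ℝ} (ha : 0 < a) (ha1 : a < 1) :
    (∑ j : Fin (m + 1), ∫ x in Sx (m + 1) ∩ {x | x j = 0},
        max (1 - (∑ i, x i) / a) 0 ∂(μH[((m + 1 : ℕ) : ℝ) - 1]))
      = a ^ m * ∑ j : Fin (m + 1), ∫ x in Sx (m + 1) ∩ {x | x j = 0},
          g (m + 1) x ∂(μH[((m + 1 : ℕ) : ℝ) - 1]) := by
  have hd : 0 ≤ ((m + 1 : ℕ) : ℝ) - 1 := by push_cast; linarith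
  rw [Finset.sum_congr rfl fun j _ => bdry_scale (m + 1) j hd ha ha1, ← Finset.mul_sum]
  congr 1
  have hcast : ((m + 1 : ℕ) : ℝ) - 1 = (m : ℝ) := by push_cast; ring
  rw [hcast, Real.rpow_natCast]

lemma main_vol_eq' (m : ℕ) (p : ℝ) (hp : 1 ≤ p) {a : ℝ} (ha : 0 < a) (ha1 : a < 1) :
    (∫ x in {x : EuclideanSpace ℝ (Fin (m + 1)) | (∀ i, 0 ≤ x i) ∧ ∑ i, x i ≤ 1},
        (max (1 - (∑ i, x i) / a) 0) ^ p) ^ (1 / p)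
      = a ^ (((m + 1 : ℕ) : ℝ) / p)
        * (∫ x in {x : EuclideanSpace ℝ (Fin (m + 1)) | (∀ i, 0 ≤ x i) ∧ ∑ i, x i ≤ 1},
            (max (1 - ∑ i, x i) 0) ^ p) ^ (1 / p) :=
  main_vol_eq m p hp ha ha1

lemma main_bdry_eq' (m : ℕ) {a : ℝ} (ha : 0 < a) (ha1 : a < 1) :
    (∑ j : Fin (m + 1), ∫ x in
        {x : EuclideanSpace ℝ (Fin (m + 1)) | (∀ i, 0 ≤ x i) ∧ ∑ i, x i ≤ 1} ∩ {x | x j = 0},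
        max (1 - (∑ i, x i) / a) 0 ∂(μH[((m + 1 : ℕ) : ℝ) - 1]))
      = a ^ m * ∑ j : Fin (m + 1), ∫ x in
          {x : EuclideanSpace ℝ (Fin (m + 1)) | (∀ i, 0 ≤ x i) ∧ ∑ i, x i ≤ 1} ∩ {x | x j = 0},
          max (1 - ∑ i, x i) 0 ∂(μH[((m + 1 : ℕ) : ℝ) - 1]) :=
  main_bdry_eq m ha ha1

set_option maxHeartbeats 1000000 in
theorem stmt_3' (n : ℕ) (hn : 1 ≤ n) (p : ℝ) (hp : 1 ≤ p) :
    ∃ C₁ C₂ : ℝ, 0 < C₁ ∧ 0 < C₂ ∧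
      (∀ a : ℝ, 0 < a → a < 1 →
        (∫ x in {x : EuclideanSpace ℝ (Fin n) | (∀ i, 0 ≤ x i) ∧ ∑ i, x i ≤ 1},
            (max (1 - (∑ i, x i) / a) 0) ^ p) ^ (1 / p) = a ^ ((n : ℝ) / p) * C₁ ∧
        (∑ j : Fin n, ∫ x in
            {x : EuclideanSpace ℝ (Fin n) | (∀ i, 0 ≤ x i) ∧ ∑ i, x i ≤ 1} ∩ {x | x j = 0},
            max (1 - (∑ i, x i) / a) 0 ∂(μH[(n : ℝ) - 1])) = a ^ (n - 1) * C₂) ∧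
      (2 < n → ¬ ∃ C : ℝ, ∀ a : ℝ, 0 < a → a < 1 →
        (∫ x in {x : EuclideanSpace ℝ (Fin n) | (∀ i, 0 ≤ x i) ∧ ∑ i, x i ≤ 1},
            (max (1 - (∑ i, x i) / a) 0) ^ (2 : ℝ)) ^ (1 / (2 : ℝ)) ≤
          C * ∑ j : Fin n, ∫ x in
            {x : EuclideanSpace ℝ (Fin n) | (∀ i, 0 ≤ x i) ∧ ∑ i, x i ≤ 1} ∩ {x | x j = 0},
            max (1 - (∑ i, x i) / a) 0 ∂(μH[(n : ℝ) - 1])) := by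
  obtain ⟨m, rfl⟩ : ∃ m, n = m + 1 := ⟨n - 1, (Nat.succ_pred_eq_of_pos hn).symm⟩
  have hcast : ((m + 1 : ℕ) : ℝ) - 1 = (m : ℝ) := by push_cast; ring
  set C₂ : ℝ := ∑ j : Fin (m + 1), ∫ x in
      {x : EuclideanSpace ℝ (Fin (m + 1)) | (∀ i, 0 ≤ x i) ∧ ∑ i, x i ≤ 1} ∩ {x | x j = 0},
      max (1 - ∑ i, x i) 0 ∂(μH[((m + 1 : ℕ) : ℝ) - 1]) with hC₂
  have hC₂pos : 0 < C₂ := by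
    rw [hC₂, hcast]
    refine Finset.sum_pos (fun j _ => ?_) Finset.univ_nonempty
    exact J_pos m j
  refine ⟨(∫ x in Sx (m + 1), g (m + 1) x ^ p) ^ (1 / p), C₂,
    Real.rpow_pos_of_pos (I1_pos (m + 1) p hp) _, hC₂pos, fun a ha ha1 => ?_, ?_⟩
  · constructor
    · exact main_vol_eq m p hp ha ha1
    · rw [Nat.add_sub_cancel]
      exact main_bdry_eq m ha ha1
  · intro hn2 ⟨C, hC⟩
    have hm2 : 2 ≤ m := by omega
    set c1 : ℝ := (∫ x in {x : EuclideanSpace ℝ (Fin (m + 1)) | (∀ i, 0 ≤ x i) ∧ ∑ i, x i ≤ 1},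
        (max (1 - ∑ i, x i) 0) ^ (2:ℝ)) ^ (1 / (2 : ℝ)) with hc1
    have hc1pos : 0 < c1 := Real.rpow_pos_of_pos (I1_pos (m + 1) 2 one_le_two) _
    set q : ℝ := ((m + 1 : ℕ) : ℝ) / 2 with hq
    set e : ℝ := (m : ℝ) - q with he
    have hm2' : (2 : ℝ) ≤ (m : ℝ) := by exact_mod_cast hm2
    have hepos : 0 < e := by
      rw [he, hq]
      push_cast
      linarith
    have key : ∀ a : ℝ, 0 < a → a < 1 → c1 ≤ C * C₂ * a ^ e := by
      intro a ha ha1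
      have h1 := hC a ha ha1
      rw [main_vol_eq' m 2 one_le_two ha ha1, main_bdry_eq' m ha ha1, ← hC₂] at h1
      have hsplit : (a : ℝ) ^ m = a ^ q * a ^ e := by
        rw [← Real.rpow_natCast a m, ← Real.rpow_add ha]
        congr 1
        rw [he]; ring
      have h2 : a ^ q * c1 ≤ a ^ q * (C * C₂ * a ^ e) := by
        calc a ^ q * c1 ≤ C * (a ^ m * C₂) := h1
          _ = a ^ q * (C * C₂ * a ^ e) := by rw [hsplit]; ring
      exact le_of_mul_le_mul_left h2 (Real.rpow_pos_of_pos ha q)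
    have htend : Filter.Tendsto (fun a : ℝ => C * C₂ * a ^ e) (nhdsWithin 0 (Ioi 0))
        (nhds 0) := by
      have h1 : Filter.Tendsto (fun a : ℝ => a ^ e) (nhds 0) (nhds 0) := by
        have := (Real.continuousAt_rpow_const 0 e (Or.inr hepos.le)).tendsto
        rwa [Real.zero_rpow hepos.ne'] at this
      have h2 := h1.const_mul (C * C₂)
      rw [mul_zero] at h2
      exact h2.mono_left nhdsWithin_le_nhds
    have hev : ∀ᶠ a in nhdsWithin (0:ℝ) (Ioi 0), c1 ≤ C * C₂ * a ^ e := by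
      filter_upwards [Ioo_mem_nhdsGT zero_lt_one] with a ha'
      exact key a ha'.1 ha'.2
    have : c1 ≤ 0 := ge_of_tendsto htend hev
    linarith


end Stmt3Aux
end



open MeasureTheory Set

/-- On the standard simplex `S ⊂ ℝⁿ`, for `0 < a < 1` the function
`h(x) = max (1 - (Σ xᵢ)/a) 0` has `L^p` norm equal to `a^{n/p}·C₁` and boundary
integral over the coordinate faces equal to `a^{n-1}·C₂`, for positive constants
`C₁, C₂` depending only on `n` and `p`; in particular for `n > 2` and `p = 2`
there is no constant `C` with `‖h‖_{L²(S)} ≤ C ∫_{∂S} h dσ` uniformly in `a`. -/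
theorem stmt_3 (n : ℕ) (hn : 1 ≤ n) (p : ℝ) (hp : 1 ≤ p) :
    ∃ C₁ C₂ : ℝ, 0 < C₁ ∧ 0 < C₂ ∧
      (∀ a : ℝ, 0 < a → a < 1 →
        (∫ x in {x : EuclideanSpace ℝ (Fin n) | (∀ i, 0 ≤ x i) ∧ ∑ i, x i ≤ 1},
            (max (1 - (∑ i, x i) / a) 0) ^ p) ^ (1 / p) = a ^ ((n : ℝ) / p) * C₁ ∧
        (∑ j : Fin n, ∫ x in
            {x : EuclideanSpace ℝ (Fin n) | (∀ i, 0 ≤ x i) ∧ ∑ i, x i ≤ 1} ∩ {x | x j = 0},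
            max (1 - (∑ i, x i) / a) 0 ∂(μH[(n : ℝ) - 1])) = a ^ (n - 1) * C₂) ∧
      (2 < n → ¬ ∃ C : ℝ, ∀ a : ℝ, 0 < a → a < 1 →
        (∫ x in {x : EuclideanSpace ℝ (Fin n) | (∀ i, 0 ≤ x i) ∧ ∑ i, x i ≤ 1},
            (max (1 - (∑ i, x i) / a) 0) ^ (2 : ℝ)) ^ (1 / (2 : ℝ)) ≤
          C * ∑ j : Fin n, ∫ x in
            {x : EuclideanSpace ℝ (Fin n) | (∀ i, 0 ≤ x i) ∧ ∑ i, x i ≤ 1} ∩ {x | x j = 0},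
            max (1 - (∑ i, x i) / a) 0 ∂(μH[(n : ℝ) - 1])) := by
  exact Stmt3Aux.stmt_3' n hn p hp
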